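/- Let p be an odd prime, f : (ZMod p)^n → ℂ a Boolean function (f(x) ∈ {−1,1} for all x), η ∈ (ZMod p)^n with η ≠ 0, and λ ∈ ZMod p. Let B = ∑_{γ ∈ (ZMod p)^n} (|f̂(γ)| + |f̂(η+γ)| − |f̂(γ) + ω^λ·f̂(η+γ)|). Then, summing over a set T of coset representatives of the subgroup ⟨η⟩ = {0, η, 2η, …, (p−1)η} in (ZMod p)^n (one representative per coset): ∑_{γ ∈ T} ( ∑_{k=0}^{p−1} |f̂(γ + kη)| − |∑_{k=0}^{p−1} f̂(γ + kη)·ω^{λk}| ) ≥ B/3. -/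

import Mathlib

/-- `ω = exp(2πi/p)`, a primitive `p`-th root of unity. -/
noncomputable def pomega (p : ℕ) : ℂ :=
  Complex.exp (2 * Real.pi * Complex.I / p)

/-- The character `χ_α(x) = ω^{⟨α,x⟩}` on `(ZMod p)^n` (well-defined via `ZMod.val`
since `ω^p = 1`). -/
noncomputable def pchi (p n : ℕ) (α x : Fin n → ZMod p) : ℂ :=
  pomega p ^ (∑ i, α i * x i : ZMod p).val

/-- The Fourier coefficient `f̂(α) = p^{-n} ∑_x f(x) conj(χ_α(x))`. -/
noncomputable def phat (p n : ℕ) [NeZero p] (f : (Fin n → ZMod p) → ℂ)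
    (α : Fin n → ZMod p) : ℂ :=
  ((p : ℂ) ^ n)⁻¹ * ∑ x : Fin n → ZMod p, f x * (starRingEnd ℂ) (pchi p n α x)

lemma pomega_pow_p (p : ℕ) (hp : p ≠ 0) : pomega p ^ p = 1 := by
  rw [pomega, ← Complex.exp_nat_mul]
  have hpc : (p : ℂ) ≠ 0 := Nat.cast_ne_zero.mpr hp
  rw [show (p : ℂ) * (2 * Real.pi * Complex.I / p) = 2 * Real.pi * Complex.I by
    field_simp]
  exact Complex.exp_two_pi_mul_I

lemma pomega_abs (p : ℕ) : ‖pomega p‖ = 1 := by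
  rw [pomega, show (2 * Real.pi * Complex.I / p : ℂ) = ((2 * Real.pi / p : ℝ) : ℂ) * Complex.I by
    push_cast; ring]
  exact Complex.norm_exp_ofReal_mul_I _

lemma sum_zmod' {p : ℕ} [NeZero p] {M : Type*} [AddCommMonoid M] (F : ZMod p → M) :
    ∑ k : ZMod p, F k = ∑ k ∈ Finset.range p, F (k : ZMod p) := by
  refine Finset.sum_nbij' (fun k => k.val) (fun k => (k : ZMod p)) ?_ ?_ ?_ ?_ ?_
  · intro a _; exact Finset.mem_range.mpr (ZMod.val_lt a)
  · intro a _; exact Finset.mem_univ _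
  · intro a _; exact ZMod.natCast_rightInverse a
  · intro a ha; exact ZMod.val_cast_of_lt (Finset.mem_range.mp ha)
  · intro a _; rw [ZMod.natCast_rightInverse a]

lemma coset_ineq' {p : ℕ} [NeZero p] (hp1 : 1 < p) (a : ZMod p → ℂ) (c : ℂ)
    (hc : c ^ p = 1) (hcabs : ‖c‖ = 1) :
    ∑ k : ZMod p, (‖a k‖ + ‖a (k + 1)‖
      - ‖a k + c * a (k + 1)‖)
    ≤ 3 * ((∑ k : ZMod p, ‖a k‖)
      - ‖∑ k : ZMod p, a k * c ^ (k.val)‖) := by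
  have hχ : ∀ k : ZMod p, c * c ^ k.val = c ^ ((k + 1 : ZMod p)).val := by
    intro k
    have h1 : ((1 : ZMod p)).val = 1 := ZMod.val_one_eq_one_mod p ▸ Nat.mod_eq_of_lt hp1
    rw [ZMod.val_add, h1, ← pow_eq_pow_mod _ hc, pow_succ, mul_comm]
  have habsχ : ∀ k : ZMod p, ‖c ^ k.val‖ = 1 := by
    intro k; rw [norm_pow, hcabs, one_pow]
  set S := ∑ k : ZMod p, a k * c ^ (k.val) with hSdef
  have hshift : ∑ k : ZMod p, a (k + 1) * c ^ ((k + 1 : ZMod p)).val = S :=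
    Fintype.sum_equiv (Equiv.addRight (1 : ZMod p)) _ _ (fun k => rfl)
  have h2S : ∑ k : ZMod p, (a k + c * a (k + 1)) * c ^ k.val = 2 * S := by
    have h : ∀ k : ZMod p, (a k + c * a (k + 1)) * c ^ k.val
        = a k * c ^ k.val + a (k + 1) * c ^ ((k + 1 : ZMod p)).val := by
      intro k; rw [← hχ k]; ring
    rw [Finset.sum_congr rfl (fun k _ => h k), Finset.sum_add_distrib, hshift]
    ring
  have habs_le : ∀ (b : ZMod p → ℂ), ‖∑ k : ZMod p, b k * c ^ k.val‖
      ≤ ∑ k : ZMod p, ‖b k‖ := by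
    intro b
    calc ‖∑ k : ZMod p, b k * c ^ k.val‖
        ≤ ∑ k : ZMod p, ‖b k * c ^ k.val‖ := by
          simpa using norm_sum_le Finset.univ (fun k : ZMod p => b k * c ^ k.val)
      _ = ∑ k : ZMod p, ‖b k‖ := by
          refine Finset.sum_congr rfl fun k _ => ?_
          rw [norm_mul, habsχ k, mul_one]
  have hQ : 2 * ‖S‖ ≤ ∑ k : ZMod p, ‖a k + c * a (k + 1)‖ := by
    have h := habs_le (fun k => a k + c * a (k + 1))
    rw [h2S] at h
    simpa [norm_mul] using h
  have hS : ‖S‖ ≤ ∑ k : ZMod p, ‖a k‖ := habs_le a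
  have hshiftabs : ∑ k : ZMod p, ‖a (k + 1)‖ = ∑ k : ZMod p, ‖a k‖ :=
    Fintype.sum_equiv (Equiv.addRight (1 : ZMod p)) _ _ (fun k => rfl)
  rw [Finset.sum_sub_distrib, Finset.sum_add_distrib, hshiftabs]
  linarith

/-- **Lemma 4.5** (over-counting lemma). -/
theorem p_overcounting {p n : ℕ} [Fact p.Prime] (hp2 : p ≠ 2)
    (f : (Fin n → ZMod p) → ℂ) (hf : ∀ x, f x = 1 ∨ f x = -1)
    (η : Fin n → ZMod p) (hη : η ≠ 0) (l : ZMod p)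
    (T : Finset (Fin n → ZMod p))
    (hT : ∀ γ : Fin n → ZMod p, ∃! t, t ∈ T ∧ ∃ k : ZMod p, γ = t + k • η)
    (B : ℝ)
    (hB : ∑ γ : Fin n → ZMod p,
        (‖phat p n f γ‖ + ‖phat p n f (η + γ)‖
          - ‖phat p n f γ + pomega p ^ l.val * phat p n f (η + γ)‖) = B) :
    B / 3 ≤ ∑ γ ∈ T,
      ((∑ k ∈ Finset.range p, ‖phat p n f (γ + k • η)‖)
        - ‖∑ k ∈ Finset.range p,
            phat p n f (γ + k • η) * pomega p ^ (l.val * k)‖) := by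
  have hp : p.Prime := Fact.out
  have hp1 : 1 < p := hp.one_lt
  have hp0 : p ≠ 0 := hp.ne_zero
  set c : ℂ := pomega p ^ l.val with hcdef
  have hcp : c ^ p = 1 := by
    rw [hcdef, ← pow_mul, mul_comm, pow_mul, pomega_pow_p p hp0, one_pow]
  have hcabs : ‖c‖ = 1 := by
    rw [hcdef, norm_pow, pomega_abs p, one_pow]
  set g : (Fin n → ZMod p) → ℝ := fun γ =>
    ‖phat p n f γ‖ + ‖phat p n f (η + γ)‖
      - ‖phat p n f γ + c * phat p n f (η + γ)‖ with hgdef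
  -- regroup the full sum over cosets
  have hsum : ∑ γ : Fin n → ZMod p, g γ = ∑ t ∈ T, ∑ k : ZMod p, g (t + k • η) := by
    rw [← Finset.sum_product']
    symm
    apply Finset.sum_bij (fun (x : (Fin n → ZMod p) × ZMod p) _ => x.1 + x.2 • η)
    · intro a _; exact Finset.mem_univ _
    · intro a1 h1 a2 h2 heq
      obtain ⟨hm1, -⟩ := Finset.mem_product.mp h1
      obtain ⟨hm2, -⟩ := Finset.mem_product.mp h2
      have ht : a1.1 = a2.1 :=
        (hT (a1.1 + a1.2 • η)).unique ⟨hm1, a1.2, rfl⟩ ⟨hm2, a2.2, heq⟩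
      have hsm : a1.2 • η = a2.2 • η := by
        rw [ht] at heq; exact add_left_cancel heq
      have hz : (a1.2 - a2.2) • η = 0 := by rw [sub_smul, hsm, sub_self]
      rcases smul_eq_zero.mp hz with h | h
      · exact Prod.ext ht (sub_eq_zero.mp h)
      · exact absurd h hη
    · intro γ _
      obtain ⟨t, ⟨htT, k, hγ⟩, -⟩ := hT γ
      exact ⟨(t, k), Finset.mem_product.mpr ⟨htT, Finset.mem_univ _⟩, hγ.symm⟩
    · intro a _; rfl
  -- per-coset bound
  have hper : ∀ t ∈ T, ∑ k : ZMod p, g (t + k • η)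
      ≤ 3 * ((∑ k ∈ Finset.range p, ‖phat p n f (t + k • η)‖)
        - ‖∑ k ∈ Finset.range p,
            phat p n f (t + k • η) * pomega p ^ (l.val * k)‖) := by
    intro t _
    set a : ZMod p → ℂ := fun k => phat p n f (t + k • η) with hadef
    have hshift : ∀ k : ZMod p, η + (t + k • η) = t + (k + 1) • η := by
      intro k; rw [add_smul, one_smul]; abel
    have hgval : ∀ k : ZMod p, g (t + k • η)
        = ‖a k‖ + ‖a (k + 1)‖
          - ‖a k + c * a (k + 1)‖ := by
      intro k; rw [hgdef]; simp only [hadef, hshift k]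
    have h1 : (∑ k ∈ Finset.range p, ‖phat p n f (t + k • η)‖)
        = ∑ k : ZMod p, ‖a k‖ := by
      rw [sum_zmod' (fun k : ZMod p => ‖a k‖)]
      refine Finset.sum_congr rfl fun k _ => ?_
      rw [hadef]
      norm_num [Nat.cast_smul_eq_nsmul (ZMod p) k η]
    have h2 : (∑ k ∈ Finset.range p, phat p n f (t + k • η) * pomega p ^ (l.val * k))
        = ∑ k : ZMod p, a k * c ^ k.val := by
      rw [sum_zmod' (fun k : ZMod p => a k * c ^ k.val)]
      refine Finset.sum_congr rfl fun k hk => ?_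
      have hv : ((k : ZMod p)).val = k := ZMod.val_cast_of_lt (Finset.mem_range.mp hk)
      simp only [hadef, hv, Nat.cast_smul_eq_nsmul (ZMod p) k η, hcdef, ← pow_mul]
    rw [h1, h2, Finset.sum_congr rfl (fun k _ => hgval k)]
    exact coset_ineq' hp1 a c hcp hcabs
  have hBle : B ≤ 3 * ∑ γ ∈ T,
      ((∑ k ∈ Finset.range p, ‖phat p n f (γ + k • η)‖)
        - ‖∑ k ∈ Finset.range p,
            phat p n f (γ + k • η) * pomega p ^ (l.val * k)‖) := by
    rw [← hB]
    calc ∑ γ : Fin n → ZMod p, g γ = ∑ t ∈ T, ∑ k : ZMod p, g (t + k • η) := hsum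
      _ ≤ ∑ t ∈ T, 3 * ((∑ k ∈ Finset.range p, ‖phat p n f (t + k • η)‖)
          - ‖∑ k ∈ Finset.range p,
              phat p n f (t + k • η) * pomega p ^ (l.val * k)‖) :=
        Finset.sum_le_sum hper
      _ = _ := by rw [← Finset.mul_sum]
  linarith
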